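/- Let f : X → Y be a morphism of finite type of schemes with Y Jacobson. Then X is Jacobson, and for every closed point x ∈ X, f(x) is a closed point of Y and the residue field extension κ(f(x)) ⊆ κ(x) is finite. -/

import Mathlib

open AlgebraicGeometry CategoryTheory TopologicalSpace Opposite IsLocalRing

lemma auxResidueSurj {R S : Type*} [CommRing R] [CommRing S] [IsLocalRing S]
    [Algebra R S] (p : Ideal R) [p.IsPrime] [IsLocalization.AtPrime S p]
    (hmax : p.IsMaximal) :
    Function.Surjective ((IsLocalRing.residue S).comp (algebraMap R S)) := by
  intro y
  obtain ⟨s, rfl⟩ := IsLocalRing.residue_surjective (R := S) y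
  obtain ⟨⟨r, m⟩, hs⟩ := IsLocalization.surj (M := p.primeCompl) s
  obtain ⟨n, c, hc, hnm⟩ := hmax.exists_inv m.2
  refine ⟨n * r, ?_⟩
  have hc0 : IsLocalRing.residue S (algebraMap R S c) = 0 := by
    rw [IsLocalRing.residue_eq_zero_iff]
    exact (IsLocalization.AtPrime.to_map_mem_maximal_iff S p c).mpr hc
  have key : IsLocalRing.residue S (algebraMap R S (n * m.1)) = 1 := by
    have h1 : (n * m.1 : R) = 1 - c := by linear_combination hnm
    rw [h1, map_sub, map_one, map_sub, map_one, hc0, sub_zero]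
  have : ((IsLocalRing.residue S).comp (algebraMap R S)) (n * r)
      = IsLocalRing.residue S s * IsLocalRing.residue S (algebraMap R S (n * m.1)) := by
    simp only [RingHom.comp_apply, map_mul, ← hs]
    ring
  rw [this, key, mul_one]

lemma auxKer {X : Scheme} {U : X.Opens} (hU : IsAffineOpen U)
    {x : X} (hx : x ∈ U) :
    (hU.primeIdealOf ⟨x, hx⟩).asIdeal = RingHom.ker (X.evaluation U x hx).hom := by
  rw [hU.primeIdealOf_eq_map_closedPoint]
  show (PrimeSpectrum.comap (X.presheaf.germ U x hx).hom (closedPoint _)).asIdeal = _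
  rw [PrimeSpectrum.comap_asIdeal]
  ext a
  rw [Ideal.mem_comap, RingHom.mem_ker]
  show X.presheaf.germ U x hx a ∈ maximalIdeal _ ↔ _
  rw [← IsLocalRing.residue_eq_zero_iff]
  show X.residue x (X.presheaf.germ U x hx a) = 0 ↔ _
  rw [show X.residue x (X.presheaf.germ U x hx a) = X.evaluation U x hx a from rfl]

noncomputable def auxHomeo {X : Scheme} {U : X.Opens} (hU : IsAffineOpen U) :
    PrimeSpectrum Γ(X, U) ≃ₜ (U : Set X) :=
  (hU.fromSpec.isOpenEmbedding.isEmbedding.toHomeomorph).trans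
    (Homeomorph.setCongr hU.range_fromSpec)

lemma auxHomeo_apply {X : Scheme} {U : X.Opens} (hU : IsAffineOpen U)
    (q : PrimeSpectrum Γ(X, U)) : (auxHomeo hU q : X) = hU.fromSpec.base q := rfl

lemma auxClosedIff {X : Scheme} {U : X.Opens} (hU : IsAffineOpen U) {x : X} (hx : x ∈ U) :
    IsClosed ({⟨x, hx⟩} : Set (U : Set X)) ↔ (hU.primeIdealOf ⟨x, hx⟩).asIdeal.IsMaximal := by
  rw [← PrimeSpectrum.isClosed_singleton_iff_isMaximal]
  have he : auxHomeo hU (hU.primeIdealOf ⟨x, hx⟩) = ⟨x, hx⟩ := by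
    ext
    rw [auxHomeo_apply]
    exact hU.fromSpec_primeIdealOf ⟨x, hx⟩
  rw [← (auxHomeo hU).isClosed_image, Set.image_singleton, he]

lemma auxLocallyClosed {Y : Type*} [TopologicalSpace Y] {V : Set Y} (hV : IsOpen V)
    {y : Y} (hy : y ∈ V) (h : IsClosed ({⟨y, hy⟩} : Set V)) :
    IsLocallyClosed ({y} : Set Y) := by
  obtain ⟨t, ht, hpre⟩ := isClosed_induced_iff.mp h
  have heq : ({y} : Set Y) = t ∩ V := by
    ext z
    constructor
    · intro hz
      have hz' : z = y := hz
      subst hz'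
      have : (⟨z, hy⟩ : V) ∈ Subtype.val ⁻¹' t := by rw [hpre]; rfl
      exact ⟨this, hy⟩
    · rintro ⟨h1, h2⟩
      have : (⟨z, h2⟩ : V) ∈ Subtype.val ⁻¹' t := h1
      rw [hpre] at this
      exact congrArg Subtype.val (Set.mem_singleton_iff.mp this)
  rw [heq]
  exact ht.isLocallyClosed.inter hV.isLocallyClosed

lemma auxJacobsonRing {Y : Scheme} (hY : JacobsonSpace Y) {V : Y.Opens} (hV : IsAffineOpen V) :
    IsJacobsonRing Γ(Y, V) := by
  haveI := hY
  haveI : JacobsonSpace (V : Set Y) :=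
    JacobsonSpace.of_isOpenEmbedding V.2.isOpenEmbedding_subtypeVal
  haveI : JacobsonSpace (PrimeSpectrum Γ(Y, V)) :=
    JacobsonSpace.of_isClosedEmbedding (auxHomeo hV).isClosedEmbedding
  exact PrimeSpectrum.isJacobsonRing_iff_jacobsonSpace.mpr ‹_›

lemma auxJacobsonSub {X : Scheme} {U : X.Opens} (hU : IsAffineOpen U)
    (h : IsJacobsonRing Γ(X, U)) : JacobsonSpace (U : Set X) := by
  haveI := h
  exact JacobsonSpace.of_isClosedEmbedding (auxHomeo hU).symm.isClosedEmbedding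

/-- If `f : X → Y` is a morphism of schemes of finite type and `Y` is
Jacobson, then `X` is Jacobson, every closed point `x ∈ X` maps to a closed
point `f(x) ∈ Y`, and the residue field extension `κ(f(x)) ⊆ κ(x)` is
finite. -/
theorem jacobson_of_finiteType {X Y : Scheme} (f : X ⟶ Y)
    [LocallyOfFiniteType f] [QuasiCompact f]
    (hY : JacobsonSpace Y) :
    JacobsonSpace X ∧
    ∀ x : X, IsClosed ({x} : Set X) →
      IsClosed ({f.base x} : Set Y) ∧ (f.residueFieldMap x).hom.Finite := by
  haveI := hY
  have H : ∀ x : X, ∃ (U : X.Opens) (V : Y.Opens), IsAffineOpen U ∧ IsAffineOpen V ∧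
      x ∈ U ∧ U ≤ f ⁻¹ᵁ V := by
    intro x
    obtain ⟨V, hVaff, hxV, -⟩ := TopologicalSpace.Opens.isBasis_iff_nbhd.mp
      (Y.isBasis_affineOpens) (show f.base x ∈ (⊤ : Y.Opens) from trivial)
    obtain ⟨U, hUaff, hxU, hUV⟩ := TopologicalSpace.Opens.isBasis_iff_nbhd.mp
      (X.isBasis_affineOpens) (show x ∈ f ⁻¹ᵁ V from hxV)
    exact ⟨U, V, hUaff, hVaff, hxU, hUV⟩
  choose U V hU hV hxU hUV using H
  have hft : ∀ x, RingHom.FiniteType (f.appLE (V x) (U x) (hUV x)).hom := fun x ↦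
    HasRingHomProperty.appLE (P := @LocallyOfFiniteType) (f := f) inferInstance ⟨V x, hV x⟩ ⟨U x, hU x⟩ (hUV x)
  have hJ : ∀ x, IsJacobsonRing Γ(X, U x) := fun x ↦
    haveI := auxJacobsonRing hY (hV x)
    (hft x).isJacobsonRing
  constructor
  · rw [TopologicalSpace.IsOpenCover.jacobsonSpace_iff
      (U := U) (top_le_iff.mp fun x _ ↦ TopologicalSpace.Opens.mem_iSup.mpr ⟨x, hxU x⟩)]
    intro x
    exact auxJacobsonSub (hU x) (hJ x)
  · intro x hx
    have hfx : f.base x ∈ V x := hUV x (hxU x)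
    have hxcl : IsClosed ({⟨x, hxU x⟩} : Set ((U x : Set X))) := by
      convert hx.preimage (continuous_subtype_val (p := (· ∈ (U x : Set X)))) using 1
      ext z
      simp [Subtype.ext_iff]
    have hqm : ((hU x).primeIdealOf ⟨x, hxU x⟩).asIdeal.IsMaximal :=
      (auxClosedIff (hU x) (hxU x)).mp hxcl
    letI := TopCat.Presheaf.algebra_section_stalk X.presheaf (⟨x, hxU x⟩ : U x)
    haveI := (hU x).isLocalization_stalk ⟨x, hxU x⟩
    have hsurj : Function.Surjective (X.evaluation (U x) x (hxU x)).hom :=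
      auxResidueSurj ((hU x).primeIdealOf ⟨x, hxU x⟩).asIdeal hqm
    haveI : IsJacobsonRing Γ(Y, V x) := auxJacobsonRing hY (hV x)
    -- the composite ring hom
    set χ : Γ(Y, V x) →+* X.residueField x :=
      (X.evaluation (U x) x (hxU x)).hom.comp
        (f.appLE (V x) (U x) (hUV x)).hom with hχ
    have hχft : χ.FiniteType := (hft x).comp_surjective hsurj
    have hχfin : χ.Finite := RingHom.finite_iff_finiteType_of_isJacobsonRing.mpr hχft
    have hcomm : f.appLE (V x) (U x) (hUV x) ≫ X.evaluation (U x) x (hxU x)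
        = Y.evaluation (V x) (f.base x) hfx ≫ f.residueFieldMap x := by
      rw [Scheme.evaluation_naturality]
      rw [Scheme.Hom.appLE, Category.assoc]
      congr 1
      rw [← Scheme.germ_residue, ← Category.assoc,
        TopCat.Presheaf.germ_res]
      rfl
    have hχeq : χ = (f.residueFieldMap x).hom.comp
        (Y.evaluation (V x) (f.base x) hfx).hom := by
      rw [hχ, ← CommRingCat.hom_comp, ← CommRingCat.hom_comp, hcomm]
    have hfin : (f.residueFieldMap x).hom.Finite :=
      RingHom.Finite.of_comp_finite (hχeq ▸ hχfin)
    refine ⟨?_, hfin⟩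
    have hint : χ.IsIntegral := hχfin.to_isIntegral
    haveI : (⊥ : Ideal (X.residueField x)).IsMaximal := Ideal.bot_isMaximal
    have hkermax : (RingHom.ker χ).IsMaximal := by
      rw [RingHom.ker_eq_comap_bot]
      exact Ideal.isMaximal_comap_of_isIntegral_of_isMaximal' χ hint ⊥
    have hker : RingHom.ker χ = RingHom.ker (Y.evaluation (V x) (f.base x) hfx).hom := by
      rw [hχeq]
      ext a
      simp only [RingHom.mem_ker, RingHom.comp_apply]
      exact map_eq_zero_iff _ (RingHom.injective _)
    rw [hker] at hkermax
    have hmax' : ((hV x).primeIdealOf ⟨f.base x, hfx⟩).asIdeal.IsMaximal := by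
      rwa [auxKer (hV x) hfx]
    have hclV : IsClosed ({⟨f.base x, hfx⟩} : Set ((V x : Set Y))) :=
      (auxClosedIff (hV x) hfx).mpr hmax'
    exact isClosed_singleton_of_isLocallyClosed_singleton
      (auxLocallyClosed (V x).2 hfx hclV)
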